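/- Let m ≥ 1 and let A ⊆ ℤ_m be non-empty with |A| = n, with distinct canonical representatives a_1 < a_2 < … < a_n in {0, 1, …, m-1}, extended cyclically by a_{n+j} := a_j for 1 ≤ j ≤ n. Say that there is a match at position i (for 1 ≤ i ≤ n) if for all 1 ≤ j ≤ n one has (a_{j+1} - a_j) mod m = (a_{i+j} - a_{i+j-1}) mod m. Then Sym(A) = {(a_i - a_1) mod m : 1 ≤ i ≤ n and there is a match at position i}, where elements of Sym(A) are identified with their canonical representatives. In particular, there is a match at position i if and only if (a_i - a_1) mod m is an element of Sym(A). -/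
import Mathlib


open Pointwise

attribute [local instance] Classical.propDecidable

/-- The symmetry group of a set `A ⊆ ℤ_m`: all `h` with `A + {h} = A`. -/
def symGroup {m : ℕ} [NeZero m] (A : Finset (ZMod m)) : Finset (ZMod m) :=
  Finset.univ.filter (fun h => A + {h} = A)

/-- Cyclic successor of an index in `{1, …, n}`. -/
def succIdx (n j : ℕ) : ℕ := if j = n then 1 else j + 1

/-- Reduce an index in `{1, …, 2n}` to `{1, …, n}`. -/
def wrapIdx (n t : ℕ) : ℕ := if t ≤ n then t else t - n

lemma zmod_sub_val_of_le {m : ℕ} [NeZero m] {x y : ZMod m} (h : y.val ≤ x.val) :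
    (x - y).val = x.val - y.val := by
  have hxy : x - y = ((x.val - y.val : ℕ) : ZMod m) := by
    rw [Nat.cast_sub h]
    simp [ZMod.natCast_val, ZMod.cast_id]
  rw [hxy, ZMod.val_natCast_of_lt]
  exact lt_of_le_of_lt (Nat.sub_le _ _) (ZMod.val_lt x)

lemma zmod_sub_val_of_lt {m : ℕ} [NeZero m] {x y : ZMod m} (h : x.val < y.val) :
    (x - y).val = m - (y.val - x.val) := by
  have hne : y - x ≠ 0 := by
    intro h0
    have hv := zmod_sub_val_of_le (le_of_lt h)
    rw [h0, ZMod.val_zero] at hv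
    omega
  have hxy : x - y = -(y - x) := by ring
  rw [hxy, ZMod.neg_val, if_neg hne, zmod_sub_val_of_le (le_of_lt h)]

/-- Let `A ⊆ ℤ_m` with `|A| = n`, enumerated as `a 1, …, a n` with strictly increasing
canonical representatives, extended cyclically by `a (n + j) = a j` for `1 ≤ j ≤ n`.
There is a *match at position i* if `a (j+1) - a j = a (i+j) - a (i+j-1)` for all
`1 ≤ j ≤ n`. Then `Sym(A) = {a i - a 1 : 1 ≤ i ≤ n, match at position i}`; in
particular, there is a match at position `i` iff `a i - a 1 ∈ Sym(A)`. -/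
theorem symGroup_eq_matches (m n : ℕ) [NeZero m] (A : Finset (ZMod m)) (hA : A.Nonempty)
    (hcard : A.card = n) (a : ℕ → ZMod m)
    (ha_mono : ∀ i ∈ Finset.Icc 1 n, ∀ j ∈ Finset.Icc 1 n, i < j → (a i).val < (a j).val)
    (ha_enum : A = (Finset.Icc 1 n).image a)
    (ha_cyc : ∀ j ∈ Finset.Icc 1 n, a (n + j) = a j) :
    symGroup A =
      ((Finset.Icc 1 n).filter
          (fun i => ∀ j ∈ Finset.Icc 1 n, a (j + 1) - a j = a (i + j) - a (i + j - 1))).image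
        (fun i => a i - a 1) ∧
    ∀ i ∈ Finset.Icc 1 n,
      ((∀ j ∈ Finset.Icc 1 n, a (j + 1) - a j = a (i + j) - a (i + j - 1)) ↔
        a i - a 1 ∈ symGroup A) := by
  have hn : 1 ≤ n := by
    rcases hA with ⟨x, hx⟩
    have := Finset.card_pos.mpr ⟨x, hx⟩
    omega
  -- injectivity of `a` on the index set
  have haInj : ∀ i ∈ Finset.Icc 1 n, ∀ j ∈ Finset.Icc 1 n, a i = a j → i = j := by
    intro i hi j hj hij
    rcases lt_trichotomy i j with hlt | heq | hgt
    · exact absurd (congrArg ZMod.val hij) (Nat.ne_of_lt (ha_mono i hi j hj hlt))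
    · exact heq
    · exact absurd (congrArg ZMod.val hij).symm (Nat.ne_of_lt (ha_mono j hj i hi hgt))
  have hmemA : ∀ j ∈ Finset.Icc 1 n, a j ∈ A := by
    intro j hj; rw [ha_enum]; exact Finset.mem_image_of_mem a hj
  have hAmem : ∀ x ∈ A, ∃ j ∈ Finset.Icc 1 n, a j = x := by
    intro x hx; rw [ha_enum] at hx; exact Finset.mem_image.mp hx
  -- wrapping
  have hwI : ∀ t, 1 ≤ t → t ≤ 2 * n → wrapIdx n t ∈ Finset.Icc 1 n := by
    intro t h1 h2; unfold wrapIdx; split_ifs <;> simp [Finset.mem_Icc] <;> omega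
  have hext : ∀ t, 1 ≤ t → t ≤ 2 * n → a t = a (wrapIdx n t) := by
    intro t h1 h2
    unfold wrapIdx
    split_ifs with ht
    · rfl
    · calc a t = a (n + (t - n)) := congrArg a (by omega)
        _ = a (t - n) := ha_cyc (t - n) (by simp [Finset.mem_Icc]; omega)
  -- successor index basics
  have hsI : ∀ j ∈ Finset.Icc 1 n, succIdx n j ∈ Finset.Icc 1 n := by
    intro j hj; simp [Finset.mem_Icc] at hj; unfold succIdx
    split_ifs <;> simp [Finset.mem_Icc] <;> omega
  -- minimality: the cyclic successor realizes the least positive cyclic gap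
  have hmin : ∀ j ∈ Finset.Icc 1 n, ∀ k ∈ Finset.Icc 1 n, k ≠ j → k ≠ succIdx n j →
      (a (succIdx n j) - a j).val < (a k - a j).val := by
    intro j hj k hk hkj hks
    simp only [Finset.mem_Icc] at hj hk
    have hvm : ∀ t, (a t).val < m := fun t => ZMod.val_lt (a t)
    by_cases hjn : j = n
    · -- j = n, successor is 1
      have hseq : succIdx n j = 1 := by unfold succIdx; simp [hjn]
      rw [hseq] at hks ⊢
      have hk1 : 1 < k := by omega
      have hkn : k < j := by omega
      have h1n : (a 1).val < (a j).val :=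
        ha_mono 1 (by simp [Finset.mem_Icc]; omega) j (by simp [Finset.mem_Icc]; omega) (by omega)
      have h1k : (a 1).val < (a k).val :=
        ha_mono 1 (by simp [Finset.mem_Icc]; omega) k (by simp [Finset.mem_Icc]; omega) hk1
      have hkn' : (a k).val < (a j).val :=
        ha_mono k (by simp [Finset.mem_Icc]; omega) j (by simp [Finset.mem_Icc]; omega) hkn
      rw [zmod_sub_val_of_lt h1n, zmod_sub_val_of_lt hkn']
      have := hvm j
      omega
    · -- j < n, successor is j + 1
      have hseq : succIdx n j = j + 1 := by unfold succIdx; simp [hjn]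
      rw [hseq] at hks ⊢
      have hjn' : j < n := by omega
      have hj1 : (a j).val < (a (j+1)).val :=
        ha_mono j (by simp [Finset.mem_Icc]; omega) (j+1) (by simp [Finset.mem_Icc]; omega)
          (by omega)
      rw [zmod_sub_val_of_le (le_of_lt hj1)]
      rcases lt_or_gt_of_ne hkj with hlt | hgt
      · -- k < j
        have hkj' : (a k).val < (a j).val :=
          ha_mono k (by simp [Finset.mem_Icc]; omega) j (by simp [Finset.mem_Icc]; omega) hlt
        rw [zmod_sub_val_of_lt hkj']
        have := hvm (j+1)
        omega
      · -- j + 1 < k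
        have hk2 : j + 1 < k := by omega
        have h2 : (a (j+1)).val < (a k).val :=
          ha_mono (j+1) (by simp [Finset.mem_Icc]; omega) k (by simp [Finset.mem_Icc]; omega) hk2
        have hjk : (a j).val < (a k).val := lt_trans hj1 h2
        rw [zmod_sub_val_of_le (le_of_lt hjk)]
        omega
  -- membership in a translate
  have hmemAdd : ∀ (h : ZMod m) (x : ZMod m), x ∈ A + ({h} : Finset (ZMod m)) ↔
      ∃ y ∈ A, y + h = x := by
    intro h x; simp [Finset.mem_add]
  -- Direction A : a match at position i gives a symmetry
  have dirA : ∀ i ∈ Finset.Icc 1 n,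
      (∀ j ∈ Finset.Icc 1 n, a (j + 1) - a j = a (i + j) - a (i + j - 1)) →
      A + ({a i - a 1} : Finset (ZMod m)) = A := by
    intro i hi hmatch
    simp only [Finset.mem_Icc] at hi
    -- telescoping
    have tele : ∀ j, 1 ≤ j → j ≤ n → a (i + j - 1) - a j = a i - a 1 := by
      intro j
      induction j with
      | zero => omega
      | succ j ih =>
        intro _ hj1
        by_cases hj0 : j = 0
        · subst hj0
          have : i + 1 - 1 = i := by omega
          rw [this]
        · have ihj := ih (by omega) (by omega)
          have hmj := hmatch j (by simp [Finset.mem_Icc]; omega)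
          have h1 : i + (j + 1) - 1 = i + j := by omega
          rw [h1]
          linear_combination ihj - hmj
    apply Finset.eq_of_subset_of_card_le
    · intro x hx
      rw [hmemAdd] at hx
      obtain ⟨y, hy, hyx⟩ := hx
      obtain ⟨j, hj, rfl⟩ := hAmem y hy
      simp only [Finset.mem_Icc] at hj
      have ht := tele j hj.1 hj.2
      have hx' : x = a (i + j - 1) := by
        rw [← hyx]; linear_combination -ht
      rw [hx', hext (i + j - 1) (by omega) (by omega)]
      exact hmemA _ (hwI (i + j - 1) (by omega) (by omega))
    · rw [Finset.card_add_singleton]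
  -- Direction B : every symmetry comes from a match
  have dirB : ∀ h : ZMod m, A + ({h} : Finset (ZMod m)) = A →
      ∃ i ∈ Finset.Icc 1 n, h = a i - a 1 ∧
        (∀ j ∈ Finset.Icc 1 n, a (j + 1) - a j = a (i + j) - a (i + j - 1)) := by
    intro h hS
    -- A is stable under -h as well
    have hS' : A + ({-h} : Finset (ZMod m)) = A := by
      calc A + ({-h} : Finset (ZMod m))
          = A + ({h} : Finset (ZMod m)) + ({-h} : Finset (ZMod m)) := by rw [hS]
        _ = A + (({h} : Finset (ZMod m)) + ({-h} : Finset (ZMod m))) := add_assoc _ _ _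
        _ = A + ({0} : Finset (ZMod m)) := by
            rw [Finset.singleton_add_singleton]; norm_num
        _ = A := by
            ext x; rw [hmemAdd]; simp
    have hstep : ∀ j ∈ Finset.Icc 1 n, ∀ k ∈ Finset.Icc 1 n, a j + h = a k →
        a (succIdx n j) + h = a (succIdx n k) := by
      intro j hj k hk hjk
      by_cases hn1 : n = 1
      · have hj1 : j = 1 := by simp [Finset.mem_Icc, hn1] at hj; omega
        have hk1 : k = 1 := by simp [Finset.mem_Icc, hn1] at hk; omega
        subst hj1; subst hk1
        simpa [succIdx, hn1] using hjk
      · have hn2 : 2 ≤ n := by omega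
        have hsne : ∀ l ∈ Finset.Icc 1 n, succIdx n l ≠ l := by
          intro l hl; simp [Finset.mem_Icc] at hl; unfold succIdx
          split_ifs <;> omega
        -- a (succIdx n j) + h lands in A
        have hl : a (succIdx n j) + h ∈ A := by
          rw [← hS, hmemAdd]
          exact ⟨a (succIdx n j), hmemA _ (hsI j hj), rfl⟩
        obtain ⟨l, hlI, hla⟩ := hAmem _ hl
        have hlk : l ≠ k := by
          intro hlk
          have h1 : a (succIdx n j) + h = a j + h := by rw [← hla, hlk, ← hjk]
          have h2 : a (succIdx n j) = a j := add_right_cancel h1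
          exact hsne j hj (haInj _ (hsI j hj) _ hj h2)
        -- a (succIdx n k) - h lands in A
        have hl' : a (succIdx n k) + (-h) ∈ A := by
          rw [← hS', hmemAdd]
          exact ⟨a (succIdx n k), hmemA _ (hsI k hk), rfl⟩
        obtain ⟨l', hl'I, hl'a⟩ := hAmem _ hl'
        have hl'j : l' ≠ j := by
          intro hlj
          have h1 : a (succIdx n k) + -h = a k + -h := by
            rw [← hl'a, hlj]; linear_combination hjk
          have h2 : a (succIdx n k) = a k := add_right_cancel h1
          exact hsne k hk (haInj _ (hsI k hk) _ hk h2)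
        -- gap equalities
        have e1 : a l - a k = a (succIdx n j) - a j := by
          rw [hla]; linear_combination hjk
        have e2 : a l' - a j = a (succIdx n k) - a k := by
          rw [hl'a]; linear_combination -hjk
        have v1 : (a l - a k).val = (a (succIdx n j) - a j).val := by rw [e1]
        have v2 : (a l' - a j).val = (a (succIdx n k) - a k).val := by rw [e2]
        -- minimality both ways
        have ineq1 : (a (succIdx n k) - a k).val ≤ (a l - a k).val := by
          by_cases hls : l = succIdx n k
          · rw [hls]
          · exact le_of_lt (hmin k hk l hlI hlk hls)
        have ineq2 : (a (succIdx n j) - a j).val ≤ (a l' - a j).val := by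
          by_cases hls : l' = succIdx n j
          · rw [hls]
          · exact le_of_lt (hmin j hj l' hl'I hl'j hls)
        have veq : (a l - a k).val = (a (succIdx n k) - a k).val := by omega
        have hlsk : l = succIdx n k := by
          by_contra hne
          have := hmin k hk l hlI hlk hne
          omega
        rw [← hla, hlsk]
    -- locate the image of a 1
    have h1A : a 1 + h ∈ A := by
      rw [← hS, hmemAdd]
      exact ⟨a 1, hmemA 1 (by simp [Finset.mem_Icc]; omega), rfl⟩
    obtain ⟨i, hiI, hia⟩ := hAmem _ h1A
    have hi' : 1 ≤ i ∧ i ≤ n := by simpa [Finset.mem_Icc] using hiI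
    -- shift formula
    have L5 : ∀ j, 1 ≤ j → j ≤ n → a j + h = a (wrapIdx n (i + j - 1)) := by
      intro j
      induction j with
      | zero => omega
      | succ j ih =>
        intro _ hj1
        by_cases hj0 : j = 0
        · subst hj0
          have hw : wrapIdx n (i + 1 - 1) = i := by unfold wrapIdx; split_ifs <;> omega
          rw [hw, hia]
        · have hjge : 1 ≤ j := by omega
          have hjlt : j < n := by omega
          have ihj := ih hjge (by omega)
          have hwmem : wrapIdx n (i + j - 1) ∈ Finset.Icc 1 n :=
            hwI (i + j - 1) (by omega) (by omega)
          have := hstep j (by simp [Finset.mem_Icc]; omega) (wrapIdx n (i + j - 1)) hwmem ihj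
          have hsj : succIdx n j = j + 1 := by unfold succIdx; split_ifs <;> omega
          have hsw : succIdx n (wrapIdx n (i + j - 1)) = wrapIdx n (i + (j + 1) - 1) := by
            unfold succIdx wrapIdx; split_ifs <;> omega
          rw [hsj, hsw] at this
          exact this
    refine ⟨i, hiI, by linear_combination -hia, ?_⟩
    intro j hj
    simp only [Finset.mem_Icc] at hj
    by_cases hjn : j = n
    · have ha1 : a (j + 1) = a 1 := by
        calc a (j + 1) = a (n + 1) := congrArg a (by omega)
          _ = a 1 := ha_cyc 1 (by simp [Finset.mem_Icc]; omega)
      have hai : a (i + j) = a i := by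
        calc a (i + j) = a (n + i) := congrArg a (by omega)
          _ = a i := ha_cyc i hiI
      have h2 : a (i + j - 1) = a j + h := by
        rw [hext (i + j - 1) (by omega) (by omega), ← L5 j (by omega) (by omega)]
      rw [ha1, hai, h2]
      linear_combination -hia
    · have hjlt : j < n := by omega
      have h2 : a (i + j - 1) = a j + h := by
        rw [hext (i + j - 1) (by omega) (by omega), ← L5 j (by omega) (by omega)]
      have h3 : a (i + j) = a (j + 1) + h := by
        have he : i + j = i + (j + 1) - 1 := by omega
        rw [he, hext (i + (j + 1) - 1) (by omega) (by omega),
          ← L5 (j + 1) (by omega) (by omega)]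
      rw [h2, h3]
      ring
  -- assemble
  have hsymMem : ∀ h : ZMod m, h ∈ symGroup A ↔ A + ({h} : Finset (ZMod m)) = A := by
    intro h; simp [symGroup]
  constructor
  · ext h
    rw [hsymMem]
    constructor
    · intro hS
      obtain ⟨i, hiI, hhi, hmatch⟩ := dirB h hS
      simp only [Finset.mem_image, Finset.mem_filter]
      exact ⟨i, ⟨hiI, hmatch⟩, hhi.symm⟩
    · intro hmem
      simp only [Finset.mem_image, Finset.mem_filter] at hmem
      obtain ⟨i, ⟨hiI, hmatch⟩, rfl⟩ := hmem
      exact dirA i hiI hmatch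
  · intro i hiI
    constructor
    · intro hmatch
      rw [hsymMem]
      exact dirA i hiI hmatch
    · intro hmem
      rw [hsymMem] at hmem
      obtain ⟨i', hi'I, hhi, hmatch⟩ := dirB _ hmem
      have : a i = a i' := by linear_combination hhi
      rw [haInj i hiI i' hi'I this]
      exact hmatch
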